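/- For every integer n ≥ 4 and every integer k with |k| ≤ n^{2/3}, one has |b*_{k,n} − k²/n| < 2·n^{−1/3}. -/

import Mathlib

open Real

/-- `bstar k n` for `|k| < n`. -/
noncomputable def bstar (n : ℕ) (k : ℤ) : ℝ :=
  (n : ℝ) * ((1 + ((k : ℝ) - 1 / 2) / n) * Real.log (1 + (k : ℝ) / n)
    + (1 - ((k : ℝ) - 1 / 2) / n) * Real.log (1 - (k : ℝ) / n))

lemma taylor7 (x : ℝ) (h : |x| ≤ 1/2) :
    |(x + x^2/2 + x^3/3 + x^4/4 + x^5/5 + x^6/6 + x^7/7) + Real.log (1 - x)| ≤ 2*|x|^8 := by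
  have h1 : |x| < 1 := by linarith
  have := Real.abs_log_sub_add_sum_range_le h1 7
  simp [Finset.sum_range_succ] at this
  have h2 : |x|^8/(1-|x|) ≤ 2*|x|^8 := by
    rw [div_le_iff₀ (by linarith)]
    nlinarith [pow_nonneg (abs_nonneg x) 8]
  calc |(x + x^2/2 + x^3/3 + x^4/4 + x^5/5 + x^6/6 + x^7/7) + Real.log (1 - x)|
      ≤ |x|^8/(1-|x|) := by convert this using 3; norm_num
    _ ≤ 2*|x|^8 := h2

lemma mulbd (a e B : ℝ) (ha : 0 ≤ a) (ha2 : a ≤ 3/2) (he : |e| ≤ 2*B) : |a*e| ≤ 3*B := by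
  rw [abs_mul, abs_of_nonneg ha]
  calc a*|e| ≤ (3/2)*(2*B) := mul_le_mul ha2 he (abs_nonneg e) (by norm_num)
    _ = 3*B := by ring

lemma pows (s : ℝ) (h0 : 0 ≤ s) (h : s ≤ 1/2) :
    s^3 ≤ s/4 ∧ s^5 ≤ s/16 ∧ s^7 ≤ s/64 ∧ s^8 ≤ s/128 := by
  have h2 : s^2 ≤ s/2 := by nlinarith [mul_nonneg h0 h0]
  have h3 : s^3 ≤ s/4 := by nlinarith [mul_le_mul_of_nonneg_left h2 h0]
  have h5 : s^5 ≤ s/16 := by nlinarith [mul_le_mul_of_nonneg_left h3 (pow_nonneg h0 2)]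
  have h7 : s^7 ≤ s/64 := by nlinarith [mul_le_mul_of_nonneg_left h5 (pow_nonneg h0 2)]
  have h8 : s^8 ≤ s/128 := by nlinarith [mul_le_mul_of_nonneg_left h7 h0]
  exact ⟨h3, h5, h7, h8⟩

set_option maxHeartbeats 1000000 in
lemma key (N x : ℝ) (hN : 0 ≤ N) (hx : |x| ≤ 1/2) (hNx : N * |x|^3 ≤ 1) :
    |N * ((1+x)*Real.log (1+x) + (1-x)*Real.log (1-x) - x^2)
      - (1/2)*(Real.log (1+x) - Real.log (1-x))| ≤ (7/4) * |x| := by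
  set s := |x| with hs
  have hs0 : 0 ≤ s := abs_nonneg x
  have hxs : -s ≤ x ∧ x ≤ s := abs_le.mp le_rfl
  have hs2 : x^2 = s^2 := (sq_abs x).symm
  have e4 : x^4 = s^4 := by rw [show x^4 = (x^2)^2 by ring, hs2]; ring
  have e6 : x^6 = s^6 := by rw [show x^6 = (x^2)^3 by ring, hs2]; ring
  have e8 : x^8 = s^8 := by rw [show x^8 = (x^2)^4 by ring, hs2]; ring
  -- Taylor remainders
  have he2 := taylor7 x hx
  have he1 := taylor7 (-x) (by rwa [abs_neg])
  rw [abs_neg] at he1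
  rw [← hs] at he1 he2
  set e2 : ℝ := (x + x^2/2 + x^3/3 + x^4/4 + x^5/5 + x^6/6 + x^7/7) + Real.log (1 - x) with he2d
  set e1 : ℝ := (-x + (-x)^2/2 + (-x)^3/3 + (-x)^4/4 + (-x)^5/5 + (-x)^6/6 + (-x)^7/7)
      + Real.log (1 - -x) with he1d
  have hL1 : Real.log (1 + x)
      = (x - x^2/2 + x^3/3 - x^4/4 + x^5/5 - x^6/6 + x^7/7) + e1 := by
    rw [he1d]; ring_nf
  have hL2 : Real.log (1 - x)
      = -(x + x^2/2 + x^3/3 + x^4/4 + x^5/5 + x^6/6 + x^7/7) + e2 := by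
    rw [he2d]; ring
  -- small power bounds
  obtain ⟨h3, h5, h7, h8⟩ := pows s hs0 hx
  have hs4 : N * s^4 ≤ s := by
    calc N * s^4 = (N*s^3)*s := by ring
      _ ≤ 1*s := mul_le_mul_of_nonneg_right hNx hs0
      _ = s := one_mul s
  have hs6 : N * s^6 ≤ s/4 := by
    calc N * s^6 = (N*s^3)*s^3 := by ring
      _ ≤ 1*s^3 := mul_le_mul_of_nonneg_right hNx (pow_nonneg hs0 3)
      _ = s^3 := one_mul _
      _ ≤ s/4 := h3
  have hs8 : N * s^8 ≤ s/16 := by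
    calc N * s^8 = (N*s^3)*s^5 := by ring
      _ ≤ 1*s^5 := mul_le_mul_of_nonneg_right hNx (pow_nonneg hs0 5)
      _ = s^5 := one_mul _
      _ ≤ s/16 := h5
  -- component bounds
  have hT1 : N * (x^4/6 + x^6/15 + 2*x^8/7) ≤ (21/100) * s := by
    rw [e4, e6, e8, show N * (s^4/6 + s^6/15 + 2*s^8/7)
      = (N*s^4)/6 + (N*s^6)/15 + 2*(N*s^8)/7 by ring]
    linarith
  have hT1' : 0 ≤ N * (x^4/6 + x^6/15 + 2*x^8/7) := by
    have : 0 ≤ x^4/6 + x^6/15 + 2*x^8/7 := by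
      rw [e4, e6, e8]; positivity
    positivity
  have hE : |(1+x)*e1 + (1-x)*e2| ≤ 6 * s^8 := by
    have b1 : |(1+x)*e1| ≤ 3*s^8 := mulbd _ _ _ (by linarith) (by linarith) he1
    have b2 : |(1-x)*e2| ≤ 3*s^8 := mulbd _ _ _ (by linarith) (by linarith) he2
    calc |(1+x)*e1 + (1-x)*e2| ≤ |(1+x)*e1| + |(1-x)*e2| := abs_add_le _ _
      _ ≤ 6*s^8 := by linarith
  have hNE : |N * ((1+x)*e1 + (1-x)*e2)| ≤ (3/8) * s := by
    rw [abs_mul, abs_of_nonneg hN]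
    calc N * |(1+x)*e1 + (1-x)*e2| ≤ N * (6*s^8) := mul_le_mul_of_nonneg_left hE hN
      _ = 6 * (N * s^8) := by ring
      _ ≤ 6 * (s/16) := by linarith
      _ ≤ (3/8) * s := by linarith
  have hNE' := abs_le.mp hNE
  have hS : |x + x^3/3 + x^5/5 + x^7/7| ≤ (11/10) * s := by
    have a3 : |x^3| = s^3 := by rw [abs_pow]
    have a5 : |x^5| = s^5 := by rw [abs_pow]
    have a7 : |x^7| = s^7 := by rw [abs_pow]
    calc |x + x^3/3 + x^5/5 + x^7/7|
        ≤ |x + x^3/3 + x^5/5| + |x^7/7| := abs_add_le _ _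
      _ ≤ |x + x^3/3| + |x^5/5| + |x^7/7| := by linarith [abs_add_le (x + x^3/3) (x^5/5)]
      _ ≤ |x| + |x^3/3| + |x^5/5| + |x^7/7| := by linarith [abs_add_le x (x^3/3)]
      _ = s + s^3/3 + s^5/5 + s^7/7 := by rw [abs_div, abs_div, abs_div, a3, a5, a7]; norm_num; exact hs.symm
      _ ≤ (11/10) * s := by linarith
  have hS' := abs_le.mp hS
  have he1' := abs_le.mp he1
  have he2' := abs_le.mp he2
  -- main identity
  have hid : N * ((1+x)*Real.log (1+x) + (1-x)*Real.log (1-x) - x^2)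
      - (1/2)*(Real.log (1+x) - Real.log (1-x))
    = N * (x^4/6 + x^6/15 + 2*x^8/7) + N * ((1+x)*e1 + (1-x)*e2)
      - (x + x^3/3 + x^5/5 + x^7/7) - (1/2)*(e1 - e2) := by
    rw [hL1, hL2]; ring
  rw [hid, abs_le]
  clear_value s e1 e2
  obtain ⟨hNEa, hNEb⟩ := hNE'
  obtain ⟨hSa, hSb⟩ := hS'
  obtain ⟨ha1, hb1⟩ := he1'
  obtain ⟨ha2, hb2⟩ := he2'
  constructor <;> linarith

lemma intkey (m n : ℕ) (h4 : 4 ≤ n) (h : m^3 ≤ n^2) : 2*m ≤ n := by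
  by_contra hc
  push_neg at hc
  have h1 : n + 1 ≤ 2*m := hc
  rcases eq_or_lt_of_le h4 with h5 | h5
  · -- n = 4
    have hm : 3 ≤ m := by omega
    have h27 : 3^3 ≤ m^3 := Nat.pow_le_pow_left hm 3
    subst h5
    simp at h27
    omega
  · have h5' : 5 ≤ n := h5
    have hcube : (n+1)^3 ≤ (2*m)^3 := Nat.pow_le_pow_left h1 3
    nlinarith [Nat.mul_le_mul_right (n^2) h5']

theorem stmt_18 (n : ℕ) (hn : 4 ≤ n) (k : ℤ) (hk : (|k| : ℝ) ≤ (n : ℝ) ^ ((2 : ℝ) / 3)) :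
    |bstar n k - (k : ℝ) ^ 2 / n| < 2 * (n : ℝ) ^ (-(1 : ℝ) / 3) := by
  have hn0 : (0:ℝ) < n := by positivity
  have hn0' : (n:ℝ) ≠ 0 := ne_of_gt hn0
  -- |k|^3 ≤ n^2 over ℕ
  have hcube : ((|k| : ℝ))^3 ≤ (n:ℝ)^2 := by
    have h1 : ((|k| : ℝ))^3 ≤ ((n : ℝ) ^ ((2 : ℝ) / 3))^3 :=
      pow_le_pow_left₀ (by positivity) hk 3
    have h2 : ((n : ℝ) ^ ((2 : ℝ) / 3))^(3:ℕ) = (n:ℝ)^2 := by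
      rw [← Real.rpow_natCast ((n : ℝ) ^ ((2 : ℝ) / 3)) 3, ← Real.rpow_mul (le_of_lt hn0)]
      norm_num
    calc ((|k| : ℝ))^3 ≤ ((n : ℝ) ^ ((2 : ℝ) / 3))^3 := h1
      _ = (n:ℝ)^2 := h2
  have hcubeZ : |k|^3 ≤ (n:ℤ)^2 := by exact_mod_cast hcube
  set m : ℕ := k.natAbs with hm
  have hmk : (|k| : ℤ) = (m : ℤ) := by rw [hm]; exact (Int.abs_eq_natAbs k)
  have hcubeN : m^3 ≤ n^2 := by
    have : ((m:ℤ))^3 ≤ (n:ℤ)^2 := by rw [← hmk]; exact hcubeZ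
    exact_mod_cast this
  have h2m : 2*m ≤ n := intkey m n hn hcubeN
  -- setup x
  set x : ℝ := (k:ℝ)/n with hxd
  have habs : |x| = (m:ℝ)/n := by
    rw [hxd, abs_div, abs_of_pos hn0]
    congr 1
    rw [← Int.cast_abs, hmk]
    norm_num
  have hxhalf : |x| ≤ 1/2 := by
    rw [habs, div_le_iff₀ hn0]
    have : (2:ℝ)*m ≤ n := by exact_mod_cast h2m
    linarith
  have hNx : (n:ℝ) * |x|^3 ≤ 1 := by
    rw [habs, div_pow]
    rw [show (n:ℝ) * ((m:ℝ)^3 / (n:ℝ)^3) = (m:ℝ)^3 / (n:ℝ)^2 by field_simp]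
    rw [div_le_one (by positivity)]
    exact_mod_cast hcubeN
  -- rewrite bstar
  have heq : bstar n k - (k : ℝ) ^ 2 / n
      = (n:ℝ) * ((1+x)*Real.log (1+x) + (1-x)*Real.log (1-x) - x^2)
        - (1/2)*(Real.log (1+x) - Real.log (1-x)) := by
    rw [bstar, hxd]
    field_simp
    ring
  rw [heq]
  have hkey := key (n:ℝ) x (le_of_lt hn0) hxhalf hNx
  -- |x| ≤ n^{-1/3}
  have hxle : |x| ≤ (n : ℝ) ^ (-(1 : ℝ) / 3) := by
    have h1 : |x| = (|k| : ℝ) / n := by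
      rw [habs, ← Int.cast_abs, hmk]; norm_num
    have h2 : (n:ℝ)^((2:ℝ)/3) / n = (n:ℝ)^(-(1:ℝ)/3) := by
      rw [show ((n:ℝ)^(-(1:ℝ)/3)) = (n:ℝ)^((2:ℝ)/3 - 1) by norm_num,
        Real.rpow_sub hn0, Real.rpow_one]
    rw [h1, ← h2]
    gcongr
  have hpos : (0:ℝ) < (n : ℝ) ^ (-(1 : ℝ) / 3) := Real.rpow_pos_of_pos hn0 _
  calc |(n:ℝ) * ((1+x)*Real.log (1+x) + (1-x)*Real.log (1-x) - x^2)
        - (1/2)*(Real.log (1+x) - Real.log (1-x))|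
      ≤ (7/4) * |x| := hkey
    _ ≤ (7/4) * ((n : ℝ) ^ (-(1 : ℝ) / 3)) := by
        apply mul_le_mul_of_nonneg_left hxle; norm_num
    _ < 2 * (n : ℝ) ^ (-(1 : ℝ) / 3) := by nlinarith
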